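/- arXiv:1309.1347 — 4 statements merged into one kernel-verified Lean document; each statement's English description precedes it below -/
import Mathlib

section
/- If G is factor-critical and C is a nice odd cycle of G, and P is an odd ear of G relative to C (a path of odd length with both endpoints, but no interior vertex, in C), then C + P is factor-critical. -/
open SimpleGraph

namespace EarAux

variable {V : Type*} {G : SimpleGraph V}

open SimpleGraph.Walk

/-- Alternate edges of a walk, starting with the first edge. -/
def altMatching : ∀ {x y : V}, G.Walk x y → G.Subgraph
  | _, _, .nil => ⊥
  | _, _, .cons h .nil => G.subgraphOfAdj h
  | _, _, .cons h (.cons _ q) => G.subgraphOfAdj h ⊔ altMatching q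

theorem altMatching_le : ∀ {x y : V} (q : G.Walk x y), altMatching q ≤ q.toSubgraph
  | _, _, .nil => bot_le
  | _, _, .cons h .nil => by
      rw [altMatching, Walk.toSubgraph]; exact le_sup_left
  | _, _, .cons h (.cons h' q) => by
      rw [altMatching, Walk.toSubgraph, Walk.toSubgraph]
      exact sup_le_sup le_rfl (le_trans (altMatching_le q) le_sup_right)

theorem altMatching_verts_subset {x y : V} (q : G.Walk x y) :
    (altMatching q).verts ⊆ {z | z ∈ q.support} := by
  have := (altMatching_le q).1
  rwa [Walk.verts_toSubgraph] at this

theorem altMatching_verts_odd : ∀ {x y : V} (q : G.Walk x y), Odd q.length →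
    (altMatching q).verts = {z | z ∈ q.support}
  | _, _, .nil => by intro h; simp at h
  | _, _, .cons h .nil => by
      intro _
      rw [altMatching]
      ext z; simp
  | _, _, .cons h (.cons h' q) => by
      intro hodd
      have hq : Odd q.length := by
        simp only [Walk.length_cons] at hodd
        rcases hodd with ⟨k, hk⟩
        exact ⟨k - 1, by omega⟩
      rw [altMatching, Subgraph.verts_sup, altMatching_verts_odd q hq]
      ext z; simp [Walk.support_cons]; tauto

theorem altMatching_verts_even : ∀ {x y : V} (q : G.Walk x y), Even q.length →
    q.support.Nodup → (altMatching q).verts = {z | z ∈ q.support} \ {y}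
  | x, _, .nil => by
      intro _ _
      rw [altMatching]
      ext z; simp
  | _, _, .cons h .nil => by
      intro he _; simp at he
  | _, _, @Walk.cons _ _ x w _ h (@Walk.cons _ _ _ w2 y h' q) => by
      intro he hnd
      have hq : Even q.length := by
        simp only [Walk.length_cons] at he
        rcases he with ⟨k, hk⟩
        exact ⟨k - 1, by omega⟩
      have hnd' : q.support.Nodup := by
        simp only [Walk.support_cons, List.nodup_cons] at hnd
        exact hnd.2.2
      have hy : y ∈ q.support := Walk.end_mem_support q
      simp only [Walk.support_cons, List.nodup_cons, List.mem_cons] at hnd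
      have hxy : x ≠ y := fun hh => hnd.1 (Or.inr (hh ▸ hy))
      have hwy : w ≠ y := fun hh => hnd.2.1 (hh ▸ hy)
      rw [altMatching, Subgraph.verts_sup, altMatching_verts_even q hq hnd']
      ext z
      simp only [Walk.support_cons, subgraphOfAdj_verts, Set.mem_union, Set.mem_insert_iff,
        Set.mem_singleton_iff, Set.mem_diff, Set.mem_setOf_eq, List.mem_cons]
      constructor
      · rintro ((rfl | rfl) | ⟨hz, hz'⟩)
        · exact ⟨Or.inl rfl, hxy⟩
        · exact ⟨Or.inr (Or.inl rfl), hwy⟩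
        · exact ⟨Or.inr (Or.inr hz), hz'⟩
      · rintro ⟨(rfl | rfl | hz), hz'⟩
        · exact Or.inl (Or.inl rfl)
        · exact Or.inl (Or.inr rfl)
        · exact Or.inr ⟨hz, hz'⟩

theorem altMatching_isMatching : ∀ {x y : V} (q : G.Walk x y), q.support.Nodup →
    (altMatching q).IsMatching
  | _, _, .nil => by
      intro _ v hv
      rw [altMatching] at hv
      simp at hv
  | _, _, .cons h .nil => fun _ => Subgraph.IsMatching.subgraphOfAdj h
  | _, _, .cons h (.cons h' q) => by
      intro hnd
      have hnd' : q.support.Nodup := by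
        simp only [Walk.support_cons, List.nodup_cons] at hnd
        exact hnd.2.2
      have hm := altMatching_isMatching q hnd'
      rw [altMatching]
      apply (Subgraph.IsMatching.subgraphOfAdj h).sup hm
      rw [(Subgraph.IsMatching.subgraphOfAdj h).support_eq_verts, hm.support_eq_verts]
      rw [Set.disjoint_left]
      intro z hz hz'
      have hz2 := altMatching_verts_subset q hz'
      simp only [subgraphOfAdj_verts, Set.mem_insert_iff, Set.mem_singleton_iff] at hz
      simp only [Walk.support_cons, List.nodup_cons, List.mem_cons] at hnd
      rcases hz with rfl | rfl
      · exact hnd.1 (Or.inr hz2)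
      · exact hnd.2.1 hz2

/-- Transfer a matching `M ≤ H` covering all of `H` except one vertex to a perfect
matching of the induced coercion graph. -/
theorem toCoe {H M : G.Subgraph} (hle : M ≤ H) (hM : M.IsMatching) (v : H.verts)
    (hv : M.verts = H.verts \ {(v : V)}) :
    ∃ M' : (H.coe.induce ({v}ᶜ : Set H.verts)).Subgraph, M'.IsPerfectMatching := by
  refine ⟨{ verts := Set.univ
            Adj := fun x y => M.Adj x.1.1 y.1.1
            adj_sub := fun {x y} hxy => hle.2 hxy
            edge_vert := fun _ => Set.mem_univ _
            symm := ⟨fun x y hxy => M.symm.symm _ _ hxy⟩ }, ?_, fun _ => Set.mem_univ _⟩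
  intro x _
  have hx : x.1.1 ∈ M.verts := by
    rw [hv]
    exact ⟨x.1.2, fun hc => x.2 (Subtype.ext hc)⟩
  obtain ⟨w, hw, hwu⟩ := hM hx
  have hwM : w ∈ M.verts := M.edge_vert (M.symm.symm _ _ hw)
  rw [hv] at hwM
  refine ⟨⟨⟨w, hwM.1⟩, fun hc => hwM.2 (congrArg Subtype.val hc)⟩, hw, ?_⟩
  intro y hy
  exact Subtype.ext (Subtype.ext (hwu y.1.1 hy))

theorem length_rotate {u v : V} [DecidableEq V] (c : G.Walk v v) (h : u ∈ c.support) :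
    (c.rotate u h).length = c.length := by
  have h1 := congrArg Walk.length (c.take_spec h)
  rw [Walk.length_append] at h1
  rw [Walk.rotate, Walk.length_append]
  omega

/-- An odd cycle minus its base point has a matching. -/
theorem oddCycleMatchingAux {v : V} (c : G.Walk v v) (hc : c.IsCycle) (hodd : Odd c.length) :
    ∃ M : G.Subgraph, M ≤ c.toSubgraph ∧ M.IsMatching ∧
      M.verts = {x | x ∈ c.support} \ {v} := by
  obtain ⟨w, hadj, q, rfl⟩ := Walk.not_nil_iff.mp (by
    rw [Walk.nil_iff_length_eq]
    intro h0
    rw [h0] at hodd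
    simp at hodd)
  have hqnd : q.support.Nodup := by
    have := hc.2
    simpa using this
  have hqlen : Even q.length := by
    rw [Walk.length_cons] at hodd
    rcases Nat.even_or_odd q.length with he | ho
    · exact he
    · exfalso; rcases ho with ⟨k, hk⟩; rcases hodd with ⟨m, hm⟩; omega
  refine ⟨altMatching q, ?_, altMatching_isMatching q hqnd, ?_⟩
  · rw [Walk.toSubgraph]
    exact le_trans (altMatching_le q) le_sup_right
  · rw [altMatching_verts_even q hqlen hqnd]
    have hv : v ∈ q.support := Walk.end_mem_support q
    ext z
    simp only [Set.mem_diff, Set.mem_setOf_eq, Walk.support_cons, List.mem_cons,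
      Set.mem_singleton_iff]
    constructor
    · rintro ⟨hz, hz'⟩; exact ⟨Or.inr hz, hz'⟩
    · rintro ⟨(rfl | hz), hz'⟩
      · exact absurd rfl hz'
      · exact ⟨hz, hz'⟩

/-- An odd cycle minus any vertex has a matching. -/
theorem oddCycleMatching {u v : V} (c : G.Walk u u) (hc : c.IsCycle) (hodd : Odd c.length)
    (hv : v ∈ c.support) :
    ∃ M : G.Subgraph, M ≤ c.toSubgraph ∧ M.IsMatching ∧
      M.verts = {x | x ∈ c.support} \ {v} := by
  classical
  obtain ⟨M, h1, h2, h3⟩ := oddCycleMatchingAux (c.rotate v hv) (hc.rotate hv)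
    (by rwa [length_rotate])
  refine ⟨M, ?_, h2, ?_⟩
  · rwa [Walk.toSubgraph_rotate] at h1
  · rw [h3]
    congr 1
    rw [← Walk.verts_toSubgraph, ← Walk.verts_toSubgraph, Walk.toSubgraph_rotate]

theorem earCase {u₀ a b v : V} (c : G.Walk u₀ u₀) (hc : c.IsCycle) (hodd : Odd c.length)
    (q1 : G.Walk a v) (q2 : G.Walk v b)
    (h1nd : q1.support.Nodup) (h2nd : q2.support.Nodup)
    (hdisj : ∀ z, z ∈ q1.support → z ∈ q2.support → z = v)
    (h1e : Even q1.length) (h2o : Odd q2.length)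
    (ha : a ∈ c.support) (hb : b ∈ c.support) (hvc : v ∉ c.support)
    (hint1 : ∀ z ∈ q1.support, z ≠ a → z ∉ c.support)
    (hint2 : ∀ z ∈ q2.support, z ≠ b → z ∉ c.support) :
    ∃ M : G.Subgraph, M ≤ c.toSubgraph ⊔ q1.toSubgraph ⊔ q2.toSubgraph ∧ M.IsMatching ∧
      M.verts = ({x | x ∈ c.support} ∪ {x | x ∈ q1.support} ∪ {x | x ∈ q2.support}) \ {v} := by
  obtain ⟨w, hadj, q2', rfl⟩ := Walk.not_nil_iff.mp (by
    rw [Walk.nil_iff_length_eq]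
    intro h0
    rw [h0] at h2o
    simp at h2o)
  rw [Walk.support_cons, List.nodup_cons] at h2nd
  obtain ⟨hvq2', h2nd'⟩ := h2nd
  have h2'e : Even q2'.length := by
    rw [Walk.length_cons] at h2o
    rcases h2o with ⟨k, hk⟩
    exact ⟨k, by omega⟩
  have hbq2' : b ∈ q2'.support := Walk.end_mem_support q2'
  have hav : a ≠ v := fun h => hvc (h ▸ ha)
  have hbv : b ≠ v := fun h => hvc (h ▸ hb)
  have f3 : ∀ z, z ∈ q1.support → z ∈ q2'.support → False := fun z hz hz' =>
    hvq2' ((hdisj z hz (by rw [Walk.support_cons]; exact List.mem_cons_of_mem _ hz')) ▸ hz')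
  have hint2' : ∀ z ∈ q2'.support, z ≠ b → z ∉ c.support := fun z hz hzb =>
    hint2 z (by rw [Walk.support_cons]; exact List.mem_cons_of_mem _ hz) hzb
  have m1 := altMatching_isMatching q1 h1nd
  have m2 := altMatching_isMatching q2' h2nd'
  have v1 := altMatching_verts_even q1 h1e h1nd
  have v2 := altMatching_verts_even q2' h2'e h2nd'
  obtain ⟨M3, hle3, m3, v3⟩ := oddCycleMatching c hc hodd ha
  have m12 : (altMatching q1 ⊔ altMatching q2').IsMatching := by
    apply m1.sup m2
    rw [m1.support_eq_verts, m2.support_eq_verts, v1, v2, Set.disjoint_left]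
    rintro z ⟨hz, _⟩ ⟨hz', _⟩
    exact f3 z hz hz'
  have m123 : ((altMatching q1 ⊔ altMatching q2') ⊔ M3).IsMatching := by
    apply m12.sup m3
    rw [m12.support_eq_verts, m3.support_eq_verts, Subgraph.verts_sup, v1, v2, v3,
      Set.disjoint_left]
    rintro z (⟨hz, hzv⟩ | ⟨hz, hzb⟩) ⟨hzc, hza⟩
    · exact hint1 z hz hza hzc
    · exact hint2' z hz hzb hzc
  refine ⟨(altMatching q1 ⊔ altMatching q2') ⊔ M3, ?_, m123, ?_⟩
  · refine sup_le (sup_le ?_ ?_) ?_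
    · exact le_trans (altMatching_le q1) (le_sup_of_le_left le_sup_right)
    · refine le_trans (altMatching_le q2') (le_trans ?_ le_sup_right)
      rw [Walk.toSubgraph]
      exact le_sup_right
    · exact le_trans hle3 (le_sup_of_le_left le_sup_left)
  · rw [Subgraph.verts_sup, Subgraph.verts_sup, v1, v2, v3]
    ext z
    simp only [Set.mem_union, Set.mem_diff, Set.mem_setOf_eq, Set.mem_singleton_iff,
      Walk.support_cons, List.mem_cons]
    constructor
    · rintro ((⟨hz, hzv⟩ | ⟨hz, hzb⟩) | ⟨hzc, hza⟩)
      · exact ⟨Or.inl (Or.inr hz), hzv⟩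
      · exact ⟨Or.inr (Or.inr hz), fun h => hvq2' (h ▸ hz)⟩
      · exact ⟨Or.inl (Or.inl hzc), fun h => hvc (h ▸ hzc)⟩
    · rintro ⟨((hzc | hz1) | (rfl | hz2)), hzv⟩
      · by_cases hza : z = a
        · subst hza
          exact Or.inl (Or.inl ⟨Walk.start_mem_support q1, hav⟩)
        · exact Or.inr ⟨hzc, hza⟩
      · exact Or.inl (Or.inl ⟨hz1, hzv⟩)
      · exact absurd rfl hzv
      · by_cases hzb : z = b
        · subst hzb
          by_cases hba : z = a
          · subst hba
            exact Or.inl (Or.inl ⟨Walk.start_mem_support q1, hav⟩)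
          · exact Or.inr ⟨hb, hba⟩
        · exact Or.inl (Or.inr ⟨hz2, hzb⟩)

theorem cycleVertexCase {u₀ a b v : V} (c : G.Walk u₀ u₀) (hc : c.IsCycle) (hodd : Odd c.length)
    (p : G.Walk a b) (hp : p.IsPath) (hpodd : Odd p.length)
    (ha : a ∈ c.support) (hb : b ∈ c.support)
    (hint : ∀ x ∈ p.support, x ≠ a → x ≠ b → x ∉ c.support)
    (hv : v ∈ c.support) :
    ∃ M : G.Subgraph, M ≤ c.toSubgraph ⊔ p.toSubgraph ∧ M.IsMatching ∧
      M.verts = ({x | x ∈ c.support} ∪ {x | x ∈ p.support}) \ {v} := by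
  obtain ⟨w, hadj, p', rfl⟩ := Walk.not_nil_iff.mp (by
    rw [Walk.nil_iff_length_eq]
    intro h0
    rw [h0] at hpodd
    simp at hpodd)
  have hpnd := hp.support_nodup
  rw [Walk.support_cons, List.nodup_cons] at hpnd
  obtain ⟨hap', hpnd'⟩ := hpnd
  have h'e : Even p'.length := by
    rw [Walk.length_cons] at hpodd
    rcases hpodd with ⟨k, hk⟩
    exact ⟨k, by omega⟩
  have hbp' : b ∈ p'.support := Walk.end_mem_support p'
  have hint' : ∀ z ∈ p'.support, z ≠ b → z ∉ c.support := by
    intro z hz hzb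
    have hza : z ≠ a := fun h => hap' (h ▸ hz)
    exact hint z (by rw [Walk.support_cons]; exact List.mem_cons_of_mem _ hz) hza hzb
  have m2 := altMatching_isMatching p' hpnd'
  have v2 := altMatching_verts_even p' h'e hpnd'
  obtain ⟨M1, hle1, m1, v1⟩ := oddCycleMatching c hc hodd hv
  have m12 : (M1 ⊔ altMatching p').IsMatching := by
    apply m1.sup m2
    rw [m1.support_eq_verts, m2.support_eq_verts, v1, v2, Set.disjoint_left]
    rintro z ⟨hzc, _⟩ ⟨hz, hzb⟩
    exact hint' z hz hzb hzc
  refine ⟨M1 ⊔ altMatching p', ?_, m12, ?_⟩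
  · refine sup_le (le_trans hle1 le_sup_left) ?_
    refine le_trans (altMatching_le p') (le_trans ?_ le_sup_right)
    rw [Walk.toSubgraph]
    exact le_sup_right
  · rw [Subgraph.verts_sup, v1, v2]
    ext z
    simp only [Set.mem_union, Set.mem_diff, Set.mem_setOf_eq, Set.mem_singleton_iff,
      Walk.support_cons, List.mem_cons]
    constructor
    · rintro (⟨hzc, hzv⟩ | ⟨hz, hzb⟩)
      · exact ⟨Or.inl hzc, hzv⟩
      · have hzc : z ∉ c.support := hint' z hz hzb
        exact ⟨Or.inr (Or.inr hz), fun h => hzc (h ▸ hv)⟩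
    · rintro ⟨(hzc | (rfl | hz')), hzv⟩
      · exact Or.inl ⟨hzc, hzv⟩
      · exact Or.inl ⟨ha, hzv⟩
      · by_cases hzb : z = b
        · subst hzb
          exact Or.inl ⟨hb, hzv⟩
        · exact Or.inr ⟨hz', hzb⟩

end EarAux

/-- A graph is factor-critical if deleting any vertex leaves a graph with a perfect matching. -/
def FactorCritical {V : Type*} (G : SimpleGraph V) : Prop :=
  ∀ v : V, ∃ M : (G.induce {v}ᶜ).Subgraph, M.IsPerfectMatching

/-- Adding an odd ear to a nice odd cycle of a factor-critical graph yields a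
factor-critical subgraph. -/
theorem stmt_5 {V : Type*} (G : SimpleGraph V) (hG : FactorCritical G)
    {u : V} (c : G.Walk u u) (hc : c.IsCycle) (hcodd : Odd c.length)
    (hnice : ∃ M : (G.induce {x | x ∈ c.support}ᶜ).Subgraph, M.IsPerfectMatching)
    {a b : V} (p : G.Walk a b) (hp : p.IsPath) (hpodd : Odd p.length)
    (ha : a ∈ c.support) (hb : b ∈ c.support)
    (hint : ∀ x ∈ p.support, x ≠ a → x ≠ b → x ∉ c.support) :
    FactorCritical (c.toSubgraph ⊔ p.toSubgraph).coe := by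
  classical
  intro vv
  obtain ⟨v, hv⟩ := vv
  have hv' : v ∈ c.support ∨ v ∈ p.support := by
    have h := hv
    rw [Subgraph.verts_sup, Walk.verts_toSubgraph, Walk.verts_toSubgraph] at h
    simpa using h
  have key : ∃ M : G.Subgraph, M ≤ c.toSubgraph ⊔ p.toSubgraph ∧ M.IsMatching ∧
      M.verts = ({x | x ∈ c.support} ∪ {x | x ∈ p.support}) \ {v} := by
    by_cases hvc : v ∈ c.support
    · exact EarAux.cycleVertexCase c hc hcodd p hp hpodd ha hb hint hvc
    · have hvp : v ∈ p.support := hv'.resolve_left hvc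
      have hva : v ≠ a := fun h => hvc (h ▸ ha)
      have hvb : v ≠ b := fun h => hvc (h ▸ hb)
      set q1 := p.takeUntil v hvp with hq1
      set q2 := p.dropUntil v hvp with hq2
      have hspec : q1.append q2 = p := p.take_spec hvp
      have h1nd : q1.support.Nodup := (hp.takeUntil hvp).support_nodup
      have h2nd : q2.support.Nodup := (hp.dropUntil hvp).support_nodup
      have hdisj : ∀ z, z ∈ q1.support → z ∈ q2.support → z = v := by
        intro z hz1 hz2
        by_contra hzv
        have hps : p.support = q1.support ++ q2.support.tail := by
          rw [← hspec, Walk.support_append]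
        have hnd := hp.support_nodup
        rw [hps, List.nodup_append] at hnd
        have hz2' : z ∈ q2.support.tail := by
          rw [q2.support_eq_cons, List.mem_cons] at hz2
          exact hz2.resolve_left hzv
        exact hnd.2.2 z hz1 z hz2' rfl
      have hlen : q1.length + q2.length = p.length := by
        have h := congrArg Walk.length hspec
        rwa [Walk.length_append] at h
      have hsupp : {x | x ∈ q1.support} ∪ {x | x ∈ q2.support} = {x | x ∈ p.support} := by
        rw [← Walk.verts_toSubgraph, ← Walk.verts_toSubgraph, ← Walk.verts_toSubgraph,
          ← Subgraph.verts_sup, ← Walk.toSubgraph_append, hspec]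
      have hsub : q1.toSubgraph ⊔ q2.toSubgraph = p.toSubgraph := by
        rw [← Walk.toSubgraph_append, hspec]
      have hint1 : ∀ z ∈ q1.support, z ≠ a → z ∉ c.support := by
        intro z hz hza
        have hzb : z ≠ b := by
          intro hzb
          have hbq : z ∈ q2.support := by rw [hzb]; exact Walk.end_mem_support q2
          exact hvb ((hdisj z hz hbq).symm.trans hzb)
        exact hint z (Walk.support_takeUntil_subset p hvp hz) hza hzb
      have hint2 : ∀ z ∈ q2.support, z ≠ b → z ∉ c.support := by
        intro z hz hzb
        have hza : z ≠ a := by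
          intro hza
          have haq : z ∈ q1.support := by rw [hza]; exact Walk.start_mem_support q1
          exact hva ((hdisj z haq hz).symm.trans hza)
        exact hint z (Walk.support_dropUntil_subset p hvp hz) hza hzb
      rcases Nat.even_or_odd q1.length with h1e | h1o
      · have h2o : Odd q2.length := by
          rcases hpodd with ⟨k, hk⟩
          rcases h1e with ⟨m, hm⟩
          exact ⟨k - m, by omega⟩
        obtain ⟨M, hle, hm, hverts⟩ := EarAux.earCase c hc hcodd q1 q2 h1nd h2nd hdisj h1e h2o
          ha hb hvc hint1 hint2
        refine ⟨M, ?_, hm, ?_⟩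
        · rwa [sup_assoc, hsub] at hle
        · rw [hverts, Set.union_assoc, hsupp]
      · have h2e : Even q2.length := by
          rcases hpodd with ⟨k, hk⟩
          rcases h1o with ⟨m, hm⟩
          exact ⟨k - m, by omega⟩
        have h1nd' : q2.reverse.support.Nodup := by
          rw [Walk.support_reverse]; exact List.nodup_reverse.mpr h2nd
        have h2nd' : q1.reverse.support.Nodup := by
          rw [Walk.support_reverse]; exact List.nodup_reverse.mpr h1nd
        have hdisj' : ∀ z, z ∈ q2.reverse.support → z ∈ q1.reverse.support → z = v := by
          intro z hz hz'
          rw [Walk.support_reverse, List.mem_reverse] at hz hz'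
          exact hdisj z hz' hz
        have h1e' : Even q2.reverse.length := by rwa [Walk.length_reverse]
        have h2o' : Odd q1.reverse.length := by rwa [Walk.length_reverse]
        have hint1' : ∀ z ∈ q2.reverse.support, z ≠ b → z ∉ c.support := by
          intro z hz
          rw [Walk.support_reverse, List.mem_reverse] at hz
          exact hint2 z hz
        have hint2' : ∀ z ∈ q1.reverse.support, z ≠ a → z ∉ c.support := by
          intro z hz
          rw [Walk.support_reverse, List.mem_reverse] at hz
          exact hint1 z hz
        obtain ⟨M, hle, hm, hverts⟩ := EarAux.earCase c hc hcodd q2.reverse q1.reverse h1nd'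
          h2nd' hdisj' h1e' h2o' hb ha hvc hint1' hint2'
        refine ⟨M, ?_, hm, ?_⟩
        · rw [Walk.toSubgraph_reverse, Walk.toSubgraph_reverse] at hle
          rwa [sup_assoc, sup_comm q2.toSubgraph q1.toSubgraph, hsub] at hle
        · have e1 : {x | x ∈ q1.reverse.support} = {x | x ∈ q1.support} := by
            ext z; simp [Walk.support_reverse]
          have e2 : {x | x ∈ q2.reverse.support} = {x | x ∈ q2.support} := by
            ext z; simp [Walk.support_reverse]
          rw [hverts, e1, e2, Set.union_assoc,
            Set.union_comm {x | x ∈ q2.support} {x | x ∈ q1.support}, hsupp]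
  obtain ⟨M, hle, hm, hverts⟩ := key
  apply EarAux.toCoe hle hm ⟨v, hv⟩
  show M.verts = (c.toSubgraph ⊔ p.toSubgraph).verts \ {v}
  rw [hverts, Subgraph.verts_sup, Walk.verts_toSubgraph, Walk.verts_toSubgraph]
end

section
/- Let G be a graph and U' ⊂ V(G) with |U'| odd, and suppose G[U'] is not a nice subgraph of G (i.e., G − U' has no perfect matching). Then for every vertex w ∈ U' and every perfect matching M of G − w, at least two vertices of U' are matched by M to vertices outside U' or unmatched. -/
open SimpleGraph

/-- A matching represented as a set of edges: edges of `G`, pairwise vertex-disjoint. -/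
def IsMatchingSet {V : Type*} (G : SimpleGraph V) (M : Set (Sym2 V)) : Prop :=
  M ⊆ G.edgeSet ∧ ∀ e ∈ M, ∀ f ∈ M, e ≠ f → ∀ v : V, ¬(v ∈ e ∧ v ∈ f)

/-- A vertex is covered by a set of edges if some edge contains it. -/
def Covers {V : Type*} (M : Set (Sym2 V)) (v : V) : Prop := ∃ e ∈ M, v ∈ e

/-- `M` is a perfect matching of `G - v`: a matching covering every vertex except `v`. -/
def IsPMOff {V : Type*} (G : SimpleGraph V) (M : Set (Sym2 V)) (v : V) : Prop :=
  IsMatchingSet G M ∧ ¬Covers M v ∧ ∀ w : V, w ≠ v → Covers M w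
/-- `u` is matched by `M` within the vertex set `U`. -/
def MatchedWithin {V : Type*} (M : Set (Sym2 V)) (U : Set V) (u : V) : Prop :=
  ∃ e ∈ M, u ∈ e ∧ ∀ x ∈ e, x ∈ U

/-- If `G[U']` is not nice (`G − U'` has no perfect matching), `|U'|` odd, then every
perfect matching of `G − w` (for `w ∈ U'`) leaves at least two vertices of `U'`
unmatched within `U'`. -/
theorem stmt_8 {V : Type*} [Fintype V] (G : SimpleGraph V) (U' : Finset V)
    (hsub : U' ⊂ Finset.univ) (hodd : Odd U'.card)
    (hnotnice : ¬∃ M : (G.induce (↑U' : Set V)ᶜ).Subgraph, M.IsPerfectMatching)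
    (w : V) (hw : w ∈ U') (M : Set (Sym2 V)) (hM : IsPMOff G M w) :
    ∃ u₁ ∈ U', ∃ u₂ ∈ U', u₁ ≠ u₂ ∧
      ¬MatchedWithin M (↑U' : Set V) u₁ ∧ ¬MatchedWithin M (↑U' : Set V) u₂ := by
  classical
  by_contra hcon
  push_neg at hcon
  obtain ⟨⟨hMsub, hMdisj⟩, hwnc, hcov⟩ := hM
  -- w is not matched within U'
  have hwnm : ¬ MatchedWithin M (↑U' : Set V) w := by
    rintro ⟨e, heM, hwe, -⟩
    exact hwnc ⟨e, heM, hwe⟩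
  -- every other vertex of U' is matched within U'
  have hall : ∀ u ∈ U', u ≠ w → MatchedWithin M (↑U' : Set V) u := by
    intro u hu hne
    exact hcon w hw u hu (Ne.symm hne) hwnm
  -- if an edge of M touches a vertex outside U', its other endpoint is outside U'
  have hout : ∀ x y : V, x ∉ U' → s(x, y) ∈ M → y ∉ U' := by
    intro x y hx hxy hy
    have hyw : y ≠ w := by
      rintro rfl
      exact hwnc ⟨s(x, y), hxy, Sym2.mem_mk_right x y⟩
    obtain ⟨f, hfM, hyf, hfU⟩ := hall y hy hyw
    have hef : s(x, y) ≠ f := by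
      rintro rfl
      exact hx (hfU x (Sym2.mem_mk_left x y))
    exact hMdisj _ hxy f hfM hef y ⟨Sym2.mem_mk_right x y, hyf⟩
  -- build a perfect matching of G − U'
  refine hnotnice ⟨⟨Set.univ, fun a b => s(a.1, b.1) ∈ M, ?_, fun _ => trivial, ?_⟩, ?_, fun _ => trivial⟩
  · intro a b hab
    exact hMsub hab
  · refine ⟨fun a b hab => ?_⟩
    rwa [Sym2.eq_swap] at hab
  · intro v _
    have hv : (v : V) ∉ U' := v.2
    have hvw : (v : V) ≠ w := fun h => hv (h ▸ hw)
    obtain ⟨e, heM, hve⟩ := hcov v hvw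
    obtain ⟨y, rfl⟩ := Sym2.mem_iff_exists.mp hve
    have hy : y ∉ U' := hout v y hv heM
    refine ⟨⟨y, hy⟩, heM, ?_⟩
    rintro ⟨z, hz⟩ hzM
    have heq : s((v : V), z) = s((v : V), y) := by
      by_contra hne
      exact hMdisj _ hzM _ heM hne v ⟨Sym2.mem_mk_left _ _, Sym2.mem_mk_left _ _⟩
    have : z = y ∨ ((v : V) = y ∧ z = (v : V)) := by
      rcases Sym2.eq_iff.mp heq with ⟨-, h⟩ | ⟨h1, h2⟩
      · exact Or.inl h
      · exact Or.inr ⟨h1, h2⟩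
    rcases this with h | ⟨h1, h2⟩
    · exact Subtype.ext h
    · exact Subtype.ext (h2.trans h1)
end

section
/- Let G[U] be factor-critical and 2-connected, with v ∈ U of degree at least 3 in G[U], and let e = (i,j) ∈ E[U]. Then there exists a near-perfect matching M of G[U] such that e ∈ M and v is covered by M. -/
open SimpleGraph

/-- A graph is 2-(vertex-)connected: at least 3 vertices and deleting any vertex leaves it connected. -/
def TwoConnected {V : Type*} (G : SimpleGraph V) : Prop :=
  3 ≤ (Set.univ : Set V).ncard ∧ ∀ v : V, (G.induce {v}ᶜ).Connected

/-- Auxiliary: `M` is a near-perfect matching of `G[U]` missing exactly `m`. -/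
def NPMaux {V : Type*} (G : SimpleGraph V) (U : Finset V) (M : Set (Sym2 V)) (m : V) : Prop :=
  (∀ f ∈ M, f ∈ G.edgeSet ∧ ∀ x ∈ f, x ∈ U) ∧
  (∀ f ∈ M, ∀ g ∈ M, f ≠ g → ∀ x : V, ¬(x ∈ f ∧ x ∈ g)) ∧
  ¬Covers M m ∧ (∀ u ∈ U, u ≠ m → Covers M u)

/-- Auxiliary: swap an edge to move the uncovered vertex of a near-perfect matching. -/
lemma swapNPM {V : Type*} {G : SimpleGraph V} {U : Finset V} {M : Set (Sym2 V)} {m w : V}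
    (hM : NPMaux G U M m) (hm : m ∈ U) (hw : w ∈ U) (hadj : G.Adj m w) :
    ∃ z M', z ∈ U ∧ z ≠ m ∧ NPMaux G U M' z ∧ s(m, w) ∈ M' ∧
      ∀ f ∈ M, w ∉ f → f ∈ M' := by
  obtain ⟨hE, hD, hmiss, hcov⟩ := hM
  have hmw : m ≠ w := hadj.ne
  obtain ⟨e, heM, hwe⟩ := hcov w hw (fun h => hadj.ne h.symm)
  obtain ⟨hedge, hin⟩ := hE e heM
  obtain ⟨z, rfl⟩ : ∃ z, e = s(w, z) := by
    induction e with
    | h a b =>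
      rcases Sym2.mem_iff.mp hwe with h | h
      · exact ⟨b, by rw [h]⟩
      · exact ⟨a, by rw [h, Sym2.eq_swap]⟩
  have hzadj : G.Adj w z := hedge
  have hzw : z ≠ w := hzadj.ne'
  have hzU : z ∈ U := hin z (Sym2.mem_mk_right w z)
  have hzm : z ≠ m := by
    rintro rfl
    exact hmiss ⟨s(w, z), heM, Sym2.mem_mk_right w z⟩
  refine ⟨z, insert s(m, w) (M \ {s(w, z)}), hzU, hzm, ⟨?_, ?_, ?_, ?_⟩, Set.mem_insert _ _,
    fun f hf hwf => Set.mem_insert_of_mem _ ⟨hf, fun h => hwf (h ▸ Sym2.mem_mk_left w z)⟩⟩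
  · rintro f (rfl | ⟨hf, -⟩)
    · exact ⟨hadj, by rintro x hx; rcases Sym2.mem_iff.mp hx with rfl | rfl <;> assumption⟩
    · exact hE f hf
  · have key : ∀ f ∈ M, f ≠ s(w, z) → ∀ x : V, ¬(x ∈ s(m, w) ∧ x ∈ f) := by
      rintro f hf hfne x ⟨hx1, hx2⟩
      rcases Sym2.mem_iff.mp hx1 with rfl | rfl
      · exact hmiss ⟨f, hf, hx2⟩
      · exact hD f hf s(x, z) heM hfne x ⟨hx2, Sym2.mem_mk_left x z⟩
    rintro f (rfl | ⟨hf, hfne⟩) g (rfl | ⟨hg, hgne⟩) hfg x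
    · exact fun ⟨h1, h2⟩ => hfg rfl
    · exact key g hg hgne x
    · exact fun ⟨h1, h2⟩ => key f hf hfne x ⟨h2, h1⟩
    · exact hD f hf g hg hfg x
  · rintro ⟨f, (rfl | ⟨hf, hfne⟩), hzf⟩
    · rcases Sym2.mem_iff.mp hzf with rfl | rfl
      · exact hzm rfl
      · exact hzw rfl
    · exact hD f hf s(w, z) heM hfne z ⟨hzf, Sym2.mem_mk_right w z⟩
  · intro u hu huz
    by_cases hum : u = m
    · exact ⟨s(m, w), Set.mem_insert _ _, hum ▸ Sym2.mem_mk_left m w⟩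
    by_cases huw : u = w
    · exact ⟨s(m, w), Set.mem_insert _ _, huw ▸ Sym2.mem_mk_right m w⟩
    obtain ⟨f, hf, huf⟩ := hcov u hu hum
    refine ⟨f, Set.mem_insert_of_mem _ ⟨hf, fun h => ?_⟩, huf⟩
    rw [h] at huf
    rcases Sym2.mem_iff.mp huf with rfl | rfl
    · exact huw rfl
    · exact huz rfl

/-- Auxiliary: factor-criticality yields a near-perfect matching missing any given vertex. -/
lemma baseNPM {V : Type*} {G : SimpleGraph V} {U : Finset V}
    (hfc : ∀ v : ↥(↑U : Set V), ∃ M : ((G.induce (↑U : Set V)).induce {v}ᶜ).Subgraph,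
      M.IsPerfectMatching)
    {i : V} (hi : i ∈ U) : ∃ M₀ : Set (Sym2 V), NPMaux G U M₀ i := by
  set i' : ↥(↑U : Set V) := ⟨i, hi⟩ with hi'
  obtain ⟨M, hpm⟩ := hfc i'
  set c : ↥({i'}ᶜ : Set ↥(↑U : Set V)) → V := fun x => x.1.1 with hc
  have hcinj : Function.Injective c := fun a b h => Subtype.ext (Subtype.ext h)
  refine ⟨{e | ∃ a b, M.Adj a b ∧ e = s(c a, c b)}, ?_, ?_, ?_, ?_⟩
  · rintro f ⟨a, b, hab, rfl⟩
    have hG : G.Adj (c a) (c b) := M.adj_sub hab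
    refine ⟨hG, ?_⟩
    rintro x hx
    rcases Sym2.mem_iff.mp hx with rfl | rfl
    · exact a.1.2
    · exact b.1.2
  · have key : ∀ a b a' b', M.Adj a b → M.Adj a' b' → c a = c a' →
        s(c a, c b) = s(c a', c b') := by
      intro a b a' b' hab hab' hcc
      obtain rfl := hcinj hcc
      obtain rfl := ExistsUnique.unique (hpm.1 (M.edge_vert hab)) hab hab'
      rfl
    rintro f ⟨a, b, hab, rfl⟩ g ⟨a', b', hab', rfl⟩ hfg x ⟨hx1, hx2⟩
    rcases Sym2.mem_iff.mp hx1 with rfl | h1 <;>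
      rcases Sym2.mem_iff.mp hx2 with h2 | h2
    · exact hfg (key a b a' b' hab hab' h2)
    · refine hfg ?_
      rw [Sym2.eq_swap (a := c a') (b := c b')]
      exact key a b b' a' hab hab'.symm h2
    · refine hfg ?_
      rw [Sym2.eq_swap (a := c a) (b := c b)]
      exact key b a a' b' hab.symm hab' (h1.symm.trans h2)
    · refine hfg ?_
      rw [Sym2.eq_swap (a := c a) (b := c b), Sym2.eq_swap (a := c a') (b := c b')]
      exact key b a b' a' hab.symm hab'.symm (h1.symm.trans h2)
  · rintro ⟨f, ⟨a, b, hab, rfl⟩, hif⟩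
    rcases Sym2.mem_iff.mp hif with h | h
    · exact a.2 (Subtype.ext h.symm)
    · exact b.2 (Subtype.ext h.symm)
  · intro u hu hui
    have hmem : (⟨u, hu⟩ : ↥(↑U : Set V)) ∈ ({i'}ᶜ : Set ↥(↑U : Set V)) := by
      simp only [Set.mem_compl_iff, Set.mem_singleton_iff]
      exact fun h => hui (congrArg Subtype.val h)
    set u' : ↥({i'}ᶜ : Set ↥(↑U : Set V)) := ⟨⟨u, hu⟩, hmem⟩
    obtain ⟨w, hw, -⟩ := hpm.1 (hpm.2 u')
    exact ⟨s(c u', c w), ⟨u', w, hw, rfl⟩, Sym2.mem_mk_left _ _⟩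

/-- If `G[U]` is factor-critical and 2-connected, `v ∈ U` has degree at least 3 in
`G[U]`, and `(i,j) ∈ E[U]`, then `G[U]` has a near-perfect matching containing `(i,j)`
and covering `v`. -/
theorem stmt_12 {V : Type*} (G : SimpleGraph V) (U : Finset V)
    (hfc : FactorCritical (G.induce (↑U : Set V)))
    (h2c : TwoConnected (G.induce (↑U : Set V)))
    (v : V) (hv : v ∈ U) (hdeg : 3 ≤ {u | u ∈ U ∧ G.Adj v u}.ncard)
    (i j : V) (hi : i ∈ U) (hj : j ∈ U) (hij : G.Adj i j) :
    ∃ M : Set (Sym2 V),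
      (∀ f ∈ M, f ∈ G.edgeSet ∧ ∀ x ∈ f, x ∈ U) ∧
      (∀ f ∈ M, ∀ g ∈ M, f ≠ g → ∀ x : V, ¬(x ∈ f ∧ x ∈ g)) ∧
      s(i, j) ∈ M ∧ Covers M v ∧
      (∃! u, u ∈ U ∧ ¬Covers M u) := by
  obtain ⟨M₀, hM₀⟩ := baseNPM hfc hi
  obtain ⟨k, N, hkU, hki, hN, hijN, -⟩ := swapNPM hM₀ hi hj hij
  by_cases hvk : v = k
  · subst hvk
    -- `v` is the vertex missed by `N`; pick a neighbor `w` of `v` distinct from `i, j`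
    obtain ⟨w, ⟨hwU, hwadj⟩, hwi, hwj⟩ :
        ∃ w, (w ∈ U ∧ G.Adj v w) ∧ w ≠ i ∧ w ≠ j := by
      by_contra hcon
      push_neg at hcon
      have hsub : {u | u ∈ U ∧ G.Adj v u} ⊆ ({i, j} : Set V) := by
        intro u hu
        rcases eq_or_ne u i with h | h
        · exact Or.inl h
        · exact Or.inr (hcon u hu h)
      have h2 : {u | u ∈ U ∧ G.Adj v u}.ncard ≤ 2 :=
        (Set.ncard_le_ncard hsub (Set.toFinite _)).trans
          ((Set.ncard_insert_le i {j}).trans (by simp))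
      omega
    obtain ⟨z, N', hzU, hzv, hN', hvwN', hsub⟩ := swapNPM hN hv hwU hwadj
    refine ⟨N', hN'.1, hN'.2.1, hsub s(i, j) hijN ?_, ⟨s(v, w), hvwN', Sym2.mem_mk_left v w⟩,
      z, ⟨hzU, hN'.2.2.1⟩, ?_⟩
    · intro hwij
      rcases Sym2.mem_iff.mp hwij with rfl | rfl
      · exact hwi rfl
      · exact hwj rfl
    · rintro u ⟨huU, hunc⟩
      by_contra h
      exact hunc (hN'.2.2.2 u huU h)
  · refine ⟨N, hN.1, hN.2.1, hijN, hN.2.2.2 v hv hvk, k, ⟨hkU, hN.2.2.1⟩, ?_⟩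
    rintro u ⟨huU, hunc⟩
    by_contra h
    exact hunc (hN.2.2.2 u huU h)
end

section
/- Let G[U] be factor-critical, and let U' be a set of vertices with U' ∩ U ≠ ∅, U' ⊄ U, and |U'| odd. Then there exists a near-perfect matching M of G[U] such that at least two vertices of U' are not matched by M to vertices of U'. -/
open SimpleGraph

/-- If `G[U]` is factor-critical, `U' ∩ U ≠ ∅`, `U' ⊄ U`, `|U'|` odd, then `G[U]` has a
near-perfect matching in which at least two vertices of `U'` are not matched to vertices
of `U'`. -/
theorem stmt_18 {V : Type*} (G : SimpleGraph V) (U U' : Finset V)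
    (hfc : FactorCritical (G.induce (↑U : Set V)))
    (hint : ∃ x, x ∈ U' ∧ x ∈ U) (hnsub : ¬U' ⊆ U) (hodd : Odd U'.card) :
    ∃ M : Set (Sym2 V),
      (∀ f ∈ M, f ∈ G.edgeSet ∧ ∀ x ∈ f, x ∈ U) ∧
      (∀ f ∈ M, ∀ g ∈ M, f ≠ g → ∀ x : V, ¬(x ∈ f ∧ x ∈ g)) ∧
      (∃! u, u ∈ U ∧ ¬Covers M u) ∧
      ∃ u₁ ∈ U', ∃ u₂ ∈ U', u₁ ≠ u₂ ∧
        ¬MatchedWithin M (↑U' : Set V) u₁ ∧ ¬MatchedWithin M (↑U' : Set V) u₂ := by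

  classical
  obtain ⟨x, hxU', hxU⟩ := hint
  obtain ⟨y, hyU', hyU⟩ := Finset.not_subset.mp hnsub
  set v : (↑U : Set V) := ⟨x, hxU⟩ with hv
  obtain ⟨M, hM⟩ := hfc v
  set f : ({v}ᶜ : Set (↑U : Set V)) → V := fun w => (w.1.1 : V) with hf
  set MS : Set (Sym2 V) := Sym2.map f '' M.edgeSet with hMS
  -- basic fact: every edge of MS is a G-edge with all endpoints in U, none equal to x
  have hedge : ∀ e ∈ MS, ∃ a b : ({v}ᶜ : Set (↑U : Set V)),
      e = s(f a, f b) ∧ M.Adj a b := by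
    rintro e ⟨e₀, he₀, rfl⟩
    induction e₀ using Sym2.ind with
    | _ a b =>
      exact ⟨a, b, rfl, (SimpleGraph.Subgraph.mem_edgeSet).mp he₀⟩
  have hfne : ∀ a : ({v}ᶜ : Set (↑U : Set V)), f a ≠ x := by
    intro a ha
    exact a.2 (Subtype.ext ha)
  have hfinj : Function.Injective f := by
    intro a b hab
    exact Subtype.ext (Subtype.ext hab)
  have hmem : ∀ e ∈ MS, ∀ z : V, z ∈ e → ∃ a : ({v}ᶜ : Set (↑U : Set V)), z = f a := by
    intro e he z hz
    obtain ⟨a, b, rfl, -⟩ := hedge e he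
    rcases Sym2.mem_iff.mp hz with h | h
    · exact ⟨a, h⟩
    · exact ⟨b, h⟩
  refine ⟨MS, ?_, ?_, ?_, x, hxU', y, hyU', ?_, ?_, ?_⟩
  · intro e he
    obtain ⟨a, b, rfl, hab⟩ := hedge e he
    have hG : G.Adj a.1.1 b.1.1 := hab.adj_sub
    refine ⟨hG, ?_⟩
    intro z hz
    rcases Sym2.mem_iff.mp hz with h | h
    · exact h ▸ a.1.2
    · exact h ▸ b.1.2
  · -- pairwise disjoint
    rintro e he g hg hne z ⟨hze, hzg⟩
    obtain ⟨a, b, rfl, hab⟩ := hedge e he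
    obtain ⟨c, d, rfl, hcd⟩ := hedge g hg
    have hmatch := hM.1
    have key : ∀ (p q : ({v}ᶜ : Set (↑U : Set V))), M.Adj p q → z = f p →
        ∀ (r s : ({v}ᶜ : Set (↑U : Set V))), M.Adj r s → z = f r → q = s := by
      intro p q hpq hzp r s hrs hzr
      have hp : p = r := hfinj (hzp ▸ hzr)
      subst hp
      obtain ⟨w, -, hw⟩ := hmatch (M.edge_vert hpq)
      exact (hw q hpq).trans (hw s hrs).symm
    -- z is an endpoint of both edges
    rcases Sym2.mem_iff.mp hze with h1 | h1 <;> rcases Sym2.mem_iff.mp hzg with h2 | h2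
    · have hac : a = c := hfinj (h1.symm.trans h2)
      have hbd : b = d := key a b hab h1 c d hcd h2
      exact hne (by rw [hac, hbd])
    · have had : a = d := hfinj (h1.symm.trans h2)
      have hbc : b = c := key a b hab h1 d c hcd.symm h2
      exact hne (by rw [had, hbc]; exact Sym2.eq_swap)
    · have hbc : b = c := hfinj (h1.symm.trans h2)
      have had : a = d := key b a hab.symm h1 c d hcd h2
      exact hne (by rw [had, hbc]; exact Sym2.eq_swap)
    · have hbd : b = d := hfinj (h1.symm.trans h2)
      have hac : a = c := key b a hab.symm h1 d c hcd.symm h2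
      exact hne (by rw [hac, hbd])
  · -- unique uncovered vertex: x
    refine ⟨x, ⟨hxU, ?_⟩, ?_⟩
    · rintro ⟨e, he, hxe⟩
      obtain ⟨a, ha⟩ := hmem e he x hxe
      exact hfne a ha.symm
    · rintro u ⟨huU, hunc⟩
      by_contra hux
      apply hunc
      have huv : (⟨u, huU⟩ : (↑U : Set V)) ≠ v := by
        intro h
        exact hux (congrArg Subtype.val h)
      set a : ({v}ᶜ : Set (↑U : Set V)) := ⟨⟨u, huU⟩, huv⟩ with ha
      have haverts : a ∈ M.verts := hM.2 a
      obtain ⟨w, hw, -⟩ := hM.1 haverts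
      exact ⟨s(f a, f w), ⟨s(a, w), SimpleGraph.Subgraph.mem_edgeSet.mpr hw, rfl⟩,
        Sym2.mem_mk_left _ _⟩
  · -- x ≠ y
    intro h
    exact hyU (h ▸ hxU)
  · -- x not matched within U'
    rintro ⟨e, he, hxe, -⟩
    obtain ⟨a, ha⟩ := hmem e he x hxe
    exact hfne a ha.symm
  · -- y not matched within U'
    rintro ⟨e, he, hye, -⟩
    obtain ⟨a, ha⟩ := hmem e he y hye
    exact hyU (ha ▸ a.1.2)
end
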